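/- Let (ρ, E) be a C¹ solution on [0,L] of the system (1 - 1/ρ²)ρ_x = ρE, E_x = ρ - b with constant b > 1 and 0 < ρ(x) < 1 on (0,L). Then along the solution, the quantity E²(x)/2 - (2ρ(x) - b)/(2ρ²(x)) - ρ(x) + b·ln ρ(x) is constant in x. -/

import Mathlib

/-- First integral of the steady Euler–Poisson system without semiconductor effect:
if `(ρ,E)` is a `C¹` solution on `[0,L]` of `(1 - 1/ρ²)ρ_x = ρE`, `E_x = ρ - b`
with constant `b > 1`, `ρ > 0` on `[0,L]` and `0 < ρ < 1` on `(0,L)`, then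
`E²/2 - (2ρ-b)/(2ρ²) - ρ + b·ln ρ` is constant along the solution. -/
theorem stmt_8 (L b : ℝ) (hL : 0 < L) (hb : 1 < b) (ρ E ρ' E' : ℝ → ℝ)
    (hρ : ∀ x ∈ Set.Icc (0:ℝ) L, HasDerivWithinAt ρ (ρ' x) (Set.Icc (0:ℝ) L) x)
    (hE : ∀ x ∈ Set.Icc (0:ℝ) L, HasDerivWithinAt E (E' x) (Set.Icc (0:ℝ) L) x)
    (hρctm : ContinuousOn ρ' (Set.Icc (0:ℝ) L))
    (hEctm : ContinuousOn E' (Set.Icc (0:ℝ) L))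
    (heq1 : ∀ x ∈ Set.Icc (0:ℝ) L, (1 - 1/(ρ x)^2) * ρ' x = ρ x * E x)
    (heq2 : ∀ x ∈ Set.Icc (0:ℝ) L, E' x = ρ x - b)
    (hpos : ∀ x ∈ Set.Icc (0:ℝ) L, 0 < ρ x)
    (hsup : ∀ x ∈ Set.Ioo (0:ℝ) L, ρ x < 1) :
    ∀ x ∈ Set.Icc (0:ℝ) L, ∀ y ∈ Set.Icc (0:ℝ) L,
      (E x)^2/2 - (2*ρ x - b)/(2*(ρ x)^2) - ρ x + b * Real.log (ρ x)
        = (E y)^2/2 - (2*ρ y - b)/(2*(ρ y)^2) - ρ y + b * Real.log (ρ y) := by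
  set s := Set.Icc (0:ℝ) L with hs
  set F : ℝ → ℝ := fun x => (E x)^2/2 - (2*ρ x - b)/(2*(ρ x)^2) - ρ x + b * Real.log (ρ x)
    with hF
  have key : ∀ x ∈ s, HasDerivWithinAt F 0 s x := by
    intro x hx
    have hρx := hpos x hx
    have hρne : ρ x ≠ 0 := ne_of_gt hρx
    have h1 := hρ x hx
    have h2 := hE x hx
    have hd : HasDerivWithinAt F
        (E x * E' x -
          ((2 * ρ' x - 0) * (2*(ρ x)^2) - (2*ρ x - b) * (2*(2*(ρ x)^(2-1)*ρ' x))) / (2*(ρ x)^2)^2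
          - ρ' x + b * (ρ' x / ρ x)) s x := by
      have hE2 : HasDerivWithinAt (fun x => (E x)^2/2) (E x * E' x) s x := by
        have : HasDerivWithinAt (fun x => (E x)^2) ((2:ℕ) * (E x)^(2-1) * E' x) s x := h2.pow 2
        have hd2 : HasDerivWithinAt (fun x => (E x)^2/2)
            (((2:ℕ) * (E x)^(2-1) * E' x * 2 - (E x)^2 * 0)/2^2) s x :=
          this.div (hasDerivWithinAt_const x s 2) two_ne_zero
        convert hd2 using 1; ring
      have hnum : HasDerivWithinAt (fun x => 2*ρ x - b) (2 * ρ' x - 0) s x :=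
        ((h1.const_mul 2).sub (hasDerivWithinAt_const x s b))
      have hden : HasDerivWithinAt (fun x => 2*(ρ x)^2) (2*(2*(ρ x)^(2-1)*ρ' x)) s x := by
        have : HasDerivWithinAt (fun x => (ρ x)^2) ((2:ℕ) * (ρ x)^(2-1) * ρ' x) s x := h1.pow 2
        have := this.const_mul 2
        exact this.congr_deriv (by push_cast; ring)
      have hdenne : 2*(ρ x)^2 ≠ 0 := by positivity
      have hfrac := hnum.div hden hdenne
      have hlog : HasDerivWithinAt (fun x => b * Real.log (ρ x)) (b * (ρ' x / ρ x)) s x :=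
        (h1.log hρne).const_mul b
      exact ((hE2.sub hfrac).sub h1).add hlog
    have e1 := heq1 x hx
    have e2 := heq2 x hx
    convert hd using 1
    rw [e2]
    have : E x = (1 - 1/(ρ x)^2) * ρ' x / ρ x := by
      field_simp at e1 ⊢; linarith [e1]
    rw [this]
    field_simp
    ring
  have hcont : ContinuousOn F s := fun x hx => (key x hx).continuousWithinAt
  have hconst : ∀ x ∈ s, F x = F 0 := by
    apply constant_of_has_deriv_right_zero hcont
    intro x hx
    exact (key x ⟨hx.1, hx.2.le⟩).mono_of_mem_nhdsWithin (Icc_mem_nhdsGE_of_mem hx)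
  intro x hx y hy
  show F x = F y
  rw [hconst x hx, hconst y hy]
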